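/- arXiv:2003.13211 — 3 statements merged into one kernel-verified Lean document; each statement's English description precedes it below -/
import Mathlib

section
/- Conversely, if A is a 4×4 matrix over an algebraically closed field k of characteristic p with det(A) = 0 and A ≠ 0, then the polynomial F(x) = Σ_{l,m} A_{lm} x_l x_m^q and all its partial derivatives have a common nontrivial zero, i.e. the Hermitian surface X_A is singular. -/
open Matrix Finset

/-- If `A ≠ 0` is a singular `4×4` matrix over an algebraically closed field `k` of
characteristic `p`, then the Hermitian form `F(x) = Σ A_{lm} x_l x_m^q` and all its partial
derivatives `x ↦ Σ_m A_{lm} x_m^q` have a common nontrivial zero, i.e. the Hermitian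
surface `X_A` is singular. -/
theorem hermitian_surface_singular_of_det_eq_zero (p n q : ℕ) (hp : p.Prime) (hn : 0 < n)
    (hq : q = p ^ n) (k : Type*) [Field k] [IsAlgClosed k] [CharP k p]
    (A : Matrix (Fin 4) (Fin 4) k) (hdet : A.det = 0) (hA : A ≠ 0) :
    ∃ x : Fin 4 → k, x ≠ 0 ∧
      (∑ l : Fin 4, ∑ m : Fin 4, A l m * x l * (x m) ^ q = 0) ∧
      (∀ l : Fin 4, ∑ m : Fin 4, A l m * (x m) ^ q = 0) := by
  have hq0 : 0 < q := by
    subst hq; exact pow_pos hp.pos n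
  obtain ⟨v, hv0, hv⟩ := (Matrix.exists_mulVec_eq_zero_iff).2 hdet
  -- choose q-th roots of the components of v
  have hroot : ∀ m : Fin 4, ∃ z : k, z ^ q = v m := fun m =>
    IsAlgClosed.exists_pow_nat_eq (v m) hq0
  choose x hx using hroot
  have hderiv : ∀ l : Fin 4, ∑ m : Fin 4, A l m * (x m) ^ q = 0 := by
    intro l
    have := congrFun hv l
    simpa [Matrix.mulVec, dotProduct, hx] using this
  refine ⟨x, ?_, ?_, hderiv⟩
  · intro hx0
    apply hv0
    funext m
    rw [← hx m, congrFun hx0 m]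
    simp [hq0.ne']
  · calc ∑ l : Fin 4, ∑ m : Fin 4, A l m * x l * (x m) ^ q
        = ∑ l : Fin 4, x l * ∑ m : Fin 4, A l m * (x m) ^ q := by
          congr 1; funext l; rw [Finset.mul_sum]; congr 1; funext m; ring
      _ = 0 := by simp [hderiv]
end

section
/- Let q be an odd prime power, d = (q+1)q/2, i = (q+1)/2, j = (q^2+1)/2, and M the 4×4 matrix with rows (0,1,0,0),(0,0,0,1),(0,0,-1,0),(-1,0,0,0) over a field of characteristic p dividing q. Then with v = (s^d, s^{d-i}t^i, s^{d-j}t^j, t^d), the polynomial transpose(v) · M · v^{(q)} vanishes identically in s,t. -/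
open Matrix Finset

/-- For `q` an odd prime power, with `d = (q+1)q/2`, `i = (q+1)/2`, `j = (q^2+1)/2`, the
tetranomial curve `C(d, i, j)` lies on the Hermitian surface given by the matrix with rows
`(0,1,0,0),(0,0,0,1),(0,0,-1,0),(-1,0,0,0)` over a field of characteristic `p` dividing `q`. -/
theorem curve_C_q_odd_on_hermitian (p n q : ℕ) (hp : p.Prime) (hn : 0 < n)
    (hq : q = p ^ n) (hodd : Odd q) (k : Type*) [Field k] [CharP k p] (s t : k) :
    ∑ l : Fin 4, ∑ m : Fin 4,
        (!![(0:k),1,0,0; 0,0,0,1; 0,0,-1,0; -1,0,0,0] l m) *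
          (![s ^ ((q+1)*q/2), s ^ ((q+1)*q/2 - (q+1)/2) * t ^ ((q+1)/2),
             s ^ ((q+1)*q/2 - (q^2+1)/2) * t ^ ((q^2+1)/2), t ^ ((q+1)*q/2)] l) *
          (![s ^ ((q+1)*q/2), s ^ ((q+1)*q/2 - (q+1)/2) * t ^ ((q+1)/2),
             s ^ ((q+1)*q/2 - (q^2+1)/2) * t ^ ((q^2+1)/2), t ^ ((q+1)*q/2)] m) ^ q = 0 := by
  obtain ⟨m, hm⟩ := hodd
  subst hm
  have e1 : (2*m+1+1)*(2*m+1) = 2*((m+1)*(2*m+1)) := by ring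
  have e2 : (m+1)*(2*m+1) = 2*m^2+3*m+1 := by ring
  have h1 : (2*m+1+1)*(2*m+1)/2 = (m+1)*(2*m+1) := by omega
  have h2 : (2*m+1+1)/2 = m+1 := by omega
  have h3 : ((2*m+1)^2+1)/2 = 2*m^2+2*m+1 := by
    have : (2*m+1)^2 = 4*m^2+4*m+1 := by ring
    omega
  have h4 : (m+1)*(2*m+1) - (m+1) = 2*m^2+2*m := by omega
  have h5 : (m+1)*(2*m+1) - (2*m^2+2*m+1) = m := by omega
  rw [h1, h2, h3, h4, h5]
  simp [Fin.sum_univ_succ, Matrix.cons_val_zero, Matrix.cons_val_one]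
  ring
end

section
/- Let q ≡ 3 (mod 4) be an integer with q ≥ 3. For an integer n, the divisibility (q^3+1)(q+1)/2 ∣ n(q^2−1) holds if and only if (q^3+1)/4 ∣ n. -/
/-- For `q ≡ 3 (mod 4)`, `q ≥ 3`, and an integer `n`:
`(q^3+1)(q+1)/2 ∣ n(q^2−1)` iff `(q^3+1)/4 ∣ n`. -/
theorem stabilizer_divisibility_q_three_mod_four (q : ℕ) (hq : 3 ≤ q) (hmod : q % 4 = 3)
    (n : ℤ) :
    (((q : ℤ) ^ 3 + 1) * ((q : ℤ) + 1) / 2 ∣ n * ((q : ℤ) ^ 2 - 1)) ↔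
      ((q : ℤ) ^ 3 + 1) / 4 ∣ n := by
  obtain ⟨k, hk⟩ : ∃ k : ℕ, q = 4 * k + 3 := ⟨q / 4, by omega⟩
  set b : ℤ := (k : ℤ) + 1 with hb
  have hqz : (q : ℤ) = 4 * b - 1 := by push_cast [hk]; ring
  have hbpos : 0 < b := by positivity
  set c : ℤ := 16 * b ^ 2 - 12 * b + 3 with hc
  have e1 : ((q : ℤ) ^ 3 + 1) * ((q : ℤ) + 1) = 2 * (8 * (b ^ 2 * c)) := by
    rw [hqz, hc]; ring
  have e2 : ((q : ℤ) ^ 3 + 1) = 4 * (b * c) := by rw [hqz, hc]; ring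
  have e3 : n * ((q : ℤ) ^ 2 - 1) = 8 * (b * (n * (2 * b - 1))) := by rw [hqz]; ring
  rw [e1, e2, Int.mul_ediv_cancel_left _ (by norm_num), Int.mul_ediv_cancel_left _ (by norm_num),
    e3]
  have hcop : IsCoprime (b * c) (2 * b - 1) := by
    apply IsCoprime.mul_left
    · exact ⟨2, -1, by ring⟩
    · exact ⟨1, -(8 * b - 2), by rw [hc]; ring⟩
  constructor
  · intro h
    have h' : b * c ∣ n * (2 * b - 1) := by
      have : b * (b * c) ∣ b * (n * (2 * b - 1)) := by
        have := (mul_dvd_mul_iff_left (show (8:ℤ) ≠ 0 by norm_num)).mp h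
        calc b * (b * c) = b ^ 2 * c := by ring
          _ ∣ _ := this
      exact (mul_dvd_mul_iff_left hbpos.ne').mp this
    exact hcop.dvd_of_dvd_mul_right h'
  · intro h
    have : b ^ 2 * c ∣ b * (n * (2 * b - 1)) := by
      obtain ⟨m, hm⟩ := h
      exact ⟨m * (2 * b - 1), by rw [hm]; ring⟩
    exact mul_dvd_mul_left 8 this
end
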